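/- Let K : ℕ → ℝ satisfy K(t) > 0 for every t, K monotonically decreasing, and ‖K‖ := ∑_{t=0}^∞ K(t) < ∞. Suppose there exist ε > 0 and T ∈ ℕ such that ∑_{s=0}^{t} K(s)·K(t−s) ≤ 2(1+ε)·‖K‖·K(t) for all t ≥ T. Then for every natural number n ≥ 0 and every t ∈ ℕ, the (n+1)-fold convolution power satisfies K^{*(n+1)}(t) ≤ (K(0)/K(T) + 1)·(2‖K‖(1+ε))^{n}·K(t). -/

import Mathlib

/-- Discrete convolution of two sequences: `(K * f)(t) = ∑_{s=0}^{t} K s * f (t - s)`. -/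
noncomputable def discConv (K f : ℕ → ℝ) (t : ℕ) : ℝ :=
  ∑ s ∈ Finset.range (t + 1), K s * f (t - s)

/-- Convolution powers, shifted by one: `convIter K n = K^{*(n+1)}`, i.e.
`convIter K 0 = K^{*1} = K` and `K^{*(n+2)} = K * K^{*(n+1)}`. -/
noncomputable def convIter (K : ℕ → ℝ) : ℕ → ℕ → ℝ
  | 0 => K
  | n + 1 => discConv K (convIter K n)

lemma convIter_nonneg (K : ℕ → ℝ) (hK : ∀ t, 0 ≤ K t) : ∀ n t, 0 ≤ convIter K n t := by
  intro n
  induction n with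
  | zero => exact hK
  | succ n ih =>
    intro t
    unfold convIter discConv
    exact Finset.sum_nonneg fun s _ => mul_nonneg (hK s) (ih _)

lemma double_sum_le (K g : ℕ → ℝ) (hK : ∀ t, 0 ≤ K t) (hg : ∀ t, 0 ≤ g t) (t : ℕ) :
    ∑ u ∈ Finset.range (t + 1), ∑ s ∈ Finset.range (u + 1), K s * g (u - s)
      ≤ (∑ s ∈ Finset.range (t + 1), K s) * (∑ r ∈ Finset.range (t + 1), g r) := by
  have h1 : ∀ u, ∑ s ∈ Finset.range (u + 1), K s * g (u - s)
      = ∑ p ∈ Finset.HasAntidiagonal.antidiagonal u, K p.1 * g p.2 := by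
    intro u
    rw [Finset.Nat.sum_antidiagonal_eq_sum_range_succ_mk]
  simp only [h1]
  rw [← Finset.sum_biUnion]
  · rw [Finset.sum_mul_sum, ← Finset.sum_product']
    apply Finset.sum_le_sum_of_subset_of_nonneg
    · intro p hp
      simp only [Finset.mem_biUnion, Finset.HasAntidiagonal.mem_antidiagonal, Finset.mem_range] at hp
      obtain ⟨u, hu, hpu⟩ := hp
      rw [Finset.mem_product]
      constructor <;> simp only [Finset.mem_range] <;> omega
    · intro p _ _
      exact mul_nonneg (hK _) (hg _)
  · intro a _ b _ hab
    apply Finset.disjoint_left.mpr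
    intro p hpa hpb
    simp only [Finset.HasAntidiagonal.mem_antidiagonal] at hpa hpb
    exact hab (by omega)

lemma convIter_partial_sum_le (K : ℕ → ℝ) (hK : ∀ t, 0 ≤ K t) (hKsum : Summable K) :
    ∀ n t, ∑ u ∈ Finset.range (t + 1), convIter K n u ≤ (∑' u, K u) ^ (n + 1) := by
  have hpart : ∀ t, ∑ s ∈ Finset.range (t + 1), K s ≤ ∑' u, K u := fun t =>
    Summable.sum_le_tsum _ (fun i _ => hK i) hKsum
  have hS0 : 0 ≤ ∑' u, K u := tsum_nonneg hK
  intro n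
  induction n with
  | zero => intro t; simpa [convIter] using hpart t
  | succ n ih =>
    intro t
    have := double_sum_le K (convIter K n) hK (convIter_nonneg K hK n) t
    calc ∑ u ∈ Finset.range (t + 1), convIter K (n + 1) u
        ≤ (∑ s ∈ Finset.range (t + 1), K s) * (∑ r ∈ Finset.range (t + 1), convIter K n r) := by
          simpa only [convIter, discConv] using this
      _ ≤ (∑' u, K u) * (∑' u, K u) ^ (n + 1) := by
          apply mul_le_mul (hpart t) (ih t)
            (Finset.sum_nonneg fun r _ => convIter_nonneg K hK n r) hS0
      _ = (∑' u, K u) ^ (n + 2) := by ring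


/-- **Kesten's lemma** (discrete form). If `K` is positive, monotonically decreasing and
summable, and satisfies `∑_{s=0}^t K(s) K(t-s) ≤ 2(1+ε)‖K‖ K(t)` for all `t ≥ T`, then
for every `n` and `t`, `K^{*(n+1)}(t) ≤ (K 0 / K T + 1) (2‖K‖(1+ε))^n K(t)`. -/
theorem kesten_lemma (K : ℕ → ℝ) (hKpos : ∀ t, 0 < K t) (hKmono : Antitone K)
    (hKsum : Summable K) (ε : ℝ) (hε : 0 < ε) (T : ℕ)
    (hkesten : ∀ t, T ≤ t →
      ∑ s ∈ Finset.range (t + 1), K s * K (t - s) ≤ 2 * (1 + ε) * (∑' u, K u) * K t) :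
    ∀ (n : ℕ) (t : ℕ),
      convIter K n t ≤ (K 0 / K T + 1) * (2 * (∑' u, K u) * (1 + ε)) ^ n * K t := by
  have hK0 : ∀ t, 0 ≤ K t := fun t => (hKpos t).le
  set S := ∑' u, K u with hSdef
  have hS0 : 0 ≤ S := tsum_nonneg hK0
  have hCnn : 0 ≤ K 0 / K T := div_nonneg (hK0 0) (hK0 T)
  have hρnn : 0 ≤ 2 * S * (1 + ε) := by positivity
  intro n
  induction n with
  | zero =>
    intro t
    simp only [convIter, pow_zero, mul_one]
    nlinarith [hKpos t]
  | succ n ih =>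
    intro t
    have hρn : 0 ≤ (2 * S * (1 + ε)) ^ n := pow_nonneg hρnn n
    have hCρn : 0 ≤ (K 0 / K T + 1) * (2 * S * (1 + ε)) ^ n := by positivity
    rcases le_or_gt T t with ht | ht
    · calc convIter K (n + 1) t
          ≤ ∑ s ∈ Finset.range (t + 1),
              K s * ((K 0 / K T + 1) * (2 * S * (1 + ε)) ^ n * K (t - s)) := by
            simp only [convIter, discConv]
            exact Finset.sum_le_sum fun s _ =>
              mul_le_mul_of_nonneg_left (ih (t - s)) (hK0 s)
        _ = (K 0 / K T + 1) * (2 * S * (1 + ε)) ^ n *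
              ∑ s ∈ Finset.range (t + 1), K s * K (t - s) := by
            rw [Finset.mul_sum]; congr 1; ext s; ring
        _ ≤ (K 0 / K T + 1) * (2 * S * (1 + ε)) ^ n * (2 * (1 + ε) * S * K t) :=
            mul_le_mul_of_nonneg_left (hkesten t ht) hCρn
        _ = (K 0 / K T + 1) * (2 * S * (1 + ε)) ^ (n + 1) * K t := by ring
    · have hKTt : K T ≤ K t := hKmono ht.le
      have hK0t : K 0 ≤ K 0 / K T * K t := by
        rw [div_mul_eq_mul_div, le_div_iff₀ (hKpos T)]
        exact mul_le_mul_of_nonneg_left hKTt (hK0 0)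
      have hgsum : ∑ u ∈ Finset.range (t + 1), convIter K n u ≤ S ^ (n + 1) :=
        convIter_partial_sum_le K hK0 hKsum n t
      have hSρ : S ^ (n + 1) ≤ (2 * S * (1 + ε)) ^ (n + 1) := by
        apply pow_le_pow_left₀ hS0
        nlinarith
      calc convIter K (n + 1) t
          ≤ ∑ s ∈ Finset.range (t + 1), K 0 * convIter K n (t - s) := by
            simp only [convIter, discConv]
            exact Finset.sum_le_sum fun s _ =>
              mul_le_mul_of_nonneg_right (hKmono (Nat.zero_le s))
                (convIter_nonneg K hK0 n _)
        _ = K 0 * ∑ s ∈ Finset.range (t + 1), convIter K n (t - s) := by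
            rw [Finset.mul_sum]
        _ = K 0 * ∑ u ∈ Finset.range (t + 1), convIter K n u := by
            congr 1
            rw [← Finset.sum_range_reflect]
            apply Finset.sum_congr rfl
            intro s hs
            simp only [Finset.mem_range] at hs
            congr 1
            omega
        _ ≤ K 0 * S ^ (n + 1) :=
            mul_le_mul_of_nonneg_left hgsum (hK0 0)
        _ ≤ (K 0 / K T * K t) * (2 * S * (1 + ε)) ^ (n + 1) :=
            mul_le_mul hK0t hSρ (pow_nonneg hS0 _) (mul_nonneg hCnn (hK0 t))
        _ ≤ ((K 0 / K T + 1) * K t) * (2 * S * (1 + ε)) ^ (n + 1) := by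
            apply mul_le_mul_of_nonneg_right _ (pow_nonneg hρnn _)
            nlinarith [hKpos t]
        _ = (K 0 / K T + 1) * (2 * S * (1 + ε)) ^ (n + 1) * K t := by ring
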